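/- Let λ be an e-regular partition of n obtained from the empty partition via f̃_{i_1} ⋯ f̃_{i_n} (level-1 crystal operators mod e). Then in the level-2 Fock space with bicharge (0,0), applying each operator twice yields the doubled bipartition: (f̃^{(0,0)}_{i_1})² ⋯ (f̃^{(0,0)}_{i_n})² (∅,∅) = (λ, λ). In particular (λ,λ) is an Uglov bipartition for (e,(0,0)). -/

import Mathlib

structure YPartition where
  parts : ℕ → ℕ
  antitone : Antitone parts
  finite : ∃ N, parts N = 0

def emptyP : YPartition := ⟨fun _ => 0, fun _ _ _ => le_rfl, ⟨0, rfl⟩⟩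

/-- `l` is `e`-regular: no nonzero part is repeated `e` or more times. -/
def ERegular (e : ℕ) (l : YPartition) : Prop :=
  ¬ ∃ j, l.parts j ≠ 0 ∧ l.parts j = l.parts (j + e - 1)
/-- there is a removable node at (the 0-indexed) row `a`, namely `(a, l.parts a - 1)`. -/
def RemovableRow (l : YPartition) (a : ℕ) : Prop := l.parts (a+1) < l.parts a

/-- there is an addable node at row `a`, namely `(a, l.parts a)`. -/
def AddableRow (l : YPartition) (a : ℕ) : Prop := a = 0 ∨ l.parts a < l.parts (a-1)

instance (l : YPartition) (a : ℕ) : Decidable (RemovableRow l a) :=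
  inferInstanceAs (Decidable (_ < _))

instance (l : YPartition) (a : ℕ) : Decidable (AddableRow l a) :=
  inferInstanceAs (Decidable (_ ∨ _))

/-- residue of the removable node at row `a` (0-indexed cell `(a, parts a - 1)`). -/
def remRes (e : ℕ) (l : YPartition) (a : ℕ) : ZMod e := (((l.parts a : ℤ) - 1 - (a : ℤ)) : ℤ)

/-- residue of the addable node at row `a` (0-indexed cell `(a, parts a)`). -/
def addRes (e : ℕ) (l : YPartition) (a : ℕ) : ZMod e := (((l.parts a : ℤ) - (a : ℤ)) : ℤ)

/-- the reading word of addable/removable `i`-nodes, from bottom row to top row;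
`true` encodes the letter `A` (addable), `false` encodes `R` (removable);
each letter is recorded together with its row. `N` is any bound with `l.parts N = 0`. -/
def word1 (e : ℕ) (i : ZMod e) (l : YPartition) (N : ℕ) : List (Bool × ℕ) :=
  ((List.range (N+2)).reverse).flatMap (fun a =>
    (if RemovableRow l a ∧ remRes e l a = i then [(false, a)] else []) ++
    (if AddableRow l a ∧ addRes e l a = i then [(true, a)] else []))

/-- recursively delete adjacent `RA` factors (`f` extracts the letter, `true = A`). -/
def reduceWord {α : Type} (f : α → Bool) : List α → List α
  | [] => []
  | x :: xs =>
    match reduceWord f xs with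
    | [] => [x]
    | y :: t => if f x = false ∧ f y = true then t else x :: y :: t

/-- row of the good addable `i`-node: the rightmost `A` of the reduced word. -/
def goodAddRow (e : ℕ) (i : ZMod e) (l : YPartition) (N : ℕ) : Option ℕ :=
  ((reduceWord Prod.fst (word1 e i l N)).reverse.find? (fun x => x.1)).map Prod.snd

/-- row of the good removable `i`-node: the leftmost `R` of the reduced word. -/
def goodRemRow (e : ℕ) (i : ZMod e) (l : YPartition) (N : ℕ) : Option ℕ :=
  ((reduceWord Prod.fst (word1 e i l N)).find? (fun x => !x.1)).map Prod.snd

/-- entries of the level-2 reading word contributed by component `c` (with charge `s`)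
at content `v` : the (at most one) removable then addable node of that content;
an entry `(x, c, a)` records the letter `x` (`true = A`), the component and the row. -/
def nodeEntries (l : YPartition) (s : ℤ) (c : ℕ) (N : ℕ) (v : ℤ) : List (Bool × ℕ × ℕ) :=
  (((List.range (N+2)).filter
      (fun a => decide (RemovableRow l a) && decide ((l.parts a : ℤ) - 1 - (a : ℤ) + s = v))).map
    (fun a => (false, c, a))) ++
  (((List.range (N+2)).filter
      (fun a => decide (AddableRow l a) && decide ((l.parts a : ℤ) - (a : ℤ) + s = v))).map
    (fun a => (true, c, a)))

/-- the level-2 reading word of addable/removable `i`-nodes of the bipartition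
`(l1,l2)` for the bicharge `(s1,s2)` and quantum characteristic `E` : nodes are read by
increasing content, component 2 before component 1 at equal content. `N` is any bound
with `l1.parts N = 0` (resp. for `l2`). -/
def word2 (E : ℕ) (s1 s2 : ℤ) (i : ZMod E) (l1 l2 : YPartition) (N : ℕ) :
    List (Bool × ℕ × ℕ) :=
  let lo : ℤ := min s1 s2 - (N : ℤ) - 2
  let hi : ℤ := max s1 s2 + (max (l1.parts 0) (l2.parts 0) : ℕ) + 2
  ((List.range (hi - lo + 1).toNat).map (fun t => lo + t)).flatMap (fun (v : ℤ) =>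
    if ((v : ZMod E) = i) then nodeEntries l2 s2 2 N v ++ nodeEntries l1 s1 1 N v else [])

/-- the good addable `i`-node of a bipartition: `(component, row)` of the rightmost `A`
in the reduced level-2 word. -/
def goodAdd2 (E : ℕ) (s1 s2 : ℤ) (i : ZMod E) (l1 l2 : YPartition) (N : ℕ) :
    Option (ℕ × ℕ) :=
  ((reduceWord (fun x => x.1) (word2 E s1 s2 i l1 l2 N)).reverse.find? (fun x => x.1)).map
    Prod.snd

/-- one step of the level-1 Kashiwara operator `f̃_i`. -/
def FStep1 (e : ℕ) (i : ZMod e) (P Q : YPartition) : Prop :=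
  ∃ a N, P.parts N = 0 ∧ goodAddRow e i P N = some a ∧
    Q.parts = Function.update P.parts a (P.parts a + 1)

/-- one step of the level-2 Kashiwara operator `f̃^{(s1,s2)}_{i}` on bipartitions. -/
def FStep2 (E : ℕ) (s1 s2 : ℤ) (i : ZMod E) (P Q : YPartition × YPartition) : Prop :=
  ∃ c a N, P.1.parts N = 0 ∧ P.2.parts N = 0 ∧
    goodAdd2 E s1 s2 i P.1 P.2 N = some (c, a) ∧
    ((c = 1 ∧ Q.1.parts = Function.update P.1.parts a (P.1.parts a + 1) ∧ Q.2 = P.2) ∨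
     (c = 2 ∧ Q.2.parts = Function.update P.2.parts a (P.2.parts a + 1) ∧ Q.1 = P.1))

namespace S15

variable {α β : Type}

def step (f : α → Bool) (x : α) (r : List α) : List α :=
  match r with
  | [] => [x]
  | y :: t => if f x = false ∧ f y = true then t else x :: y :: t

theorem reduceWord_cons (f : α → Bool) (x : α) (xs : List α) :
    reduceWord f (x :: xs) = step f x (reduceWord f xs) := rfl

theorem reduceWord_eq_foldr (f : α → Bool) (l : List α) :
    reduceWord f l = l.foldr (step f) [] := by
  induction l with
  | nil => rfl
  | cons x xs ih => rw [reduceWord_cons, ih, List.foldr_cons]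

theorem reduceWord_append (f : α → Bool) (u t : List α) :
    reduceWord f (u ++ t) = u.foldr (step f) (reduceWord f t) := by
  rw [reduceWord_eq_foldr, List.foldr_append, ← reduceWord_eq_foldr]

theorem step_true (f : α → Bool) {x : α} (hx : f x = true) (r : List α) :
    step f x r = x :: r := by
  cases r with
  | nil => rfl
  | cons y t => simp [step, hx]

theorem step_false_allfalse (f : α → Bool) {x : α} (hx : f x = false)
    {r : List α} (hr : ∀ y ∈ r, f y = false) : step f x r = x :: r := by
  cases r with
  | nil => rfl
  | cons y t =>
    have : f y = false := hr y (by simp)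
    simp [step, this]

theorem step_sublist (f : α → Bool) (x : α) (r : List α) :
    (step f x r).Sublist (x :: r) := by
  cases r with
  | nil => simp [step]
  | cons y t =>
    by_cases h : f x = false ∧ f y = true
    · simp only [step, if_pos h]
      exact (List.sublist_cons_self y t).trans (List.sublist_cons_self x (y :: t))
    · simp only [step, if_neg h]
      exact List.Sublist.refl _

theorem foldr_step_sublist (f : α → Bool) (u : List α) (r : List α) :
    (u.foldr (step f) r).Sublist (u ++ r) := by
  induction u with
  | nil => simp
  | cons x u ih =>
    exact ((step_sublist f x _).trans (ih.cons_cons x))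

theorem reduceWord_sublist (f : α → Bool) (w : List α) :
    (reduceWord f w).Sublist w := by
  rw [reduceWord_eq_foldr]
  simpa using foldr_step_sublist f w []

/-- doubling theorem -/
theorem reduce_flatMap_double (f : α → Bool) (f2 : β → Bool) (g2 g1 : α → β)
    (h2 : ∀ x, f2 (g2 x) = f x) (h1 : ∀ x, f2 (g1 x) = f x) (w : List α) :
    reduceWord f2 (w.flatMap (fun x => [g2 x, g1 x]))
      = (reduceWord f w).flatMap (fun x => [g2 x, g1 x]) := by
  induction w with
  | nil => rfl
  | cons x xs ih =>
    have hx2 := h2 x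
    have hx1 := h1 x
    rw [List.flatMap_cons, reduceWord_cons]
    have : reduceWord f2 ([g2 x, g1 x] ++ xs.flatMap fun x => [g2 x, g1 x])
        = step f2 (g2 x) (step f2 (g1 x) ((reduceWord f xs).flatMap (fun x => [g2 x, g1 x]))) := by
      rw [show ([g2 x, g1 x] ++ xs.flatMap fun x => [g2 x, g1 x])
            = g2 x :: g1 x :: xs.flatMap fun x => [g2 x, g1 x] from rfl,
          reduceWord_cons, reduceWord_cons, ih]
    rw [this]
    cases hr : reduceWord f xs with
    | nil =>
      cases hfx : f x
      · simp [step, hfx, hx1, hx2]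
      · simp [step, hfx, hx1, hx2]
    | cons y t =>
      have hy2 := h2 y
      have hy1 := h1 y
      cases hfx : f x
      · cases hfy : f y
        · -- no cancellation
          rw [List.flatMap_cons]
          simp [step, hfx, hfy, hx1, hx2, hy2, hy1]
        · -- cancellation
          rw [List.flatMap_cons]
          simp [step, hfx, hfy, hx1, hx2, hy2, hy1]
      · have s1 : f2 (g1 x) = true := by rw [hx1, hfx]
        have s2 : f2 (g2 x) = true := by rw [hx2, hfx]
        rw [step_true f2 s1, step_true f2 s2, step_true f hfx]
        rfl

end S15

namespace S15

variable {α β : Type}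

/-- find?-split lemma -/
theorem findsplit {p : α → Bool} {l : List α} {b : α} (h : l.find? p = some b) :
    ∃ l₁ l₂, l = l₁ ++ b :: l₂ ∧ ∀ x ∈ l₁, p x = false := by
  induction l with
  | nil => simp at h
  | cons x l ih =>
    cases hp : p x with
    | true =>
      rw [List.find?_cons_of_pos hp] at h
      obtain rfl : x = b := by simpa using h
      exact ⟨[], l, rfl, by simp⟩
    | false =>
      rw [List.find?_cons_of_neg (by simp [hp] : ¬ p x = true)] at h
      obtain ⟨l₁, l₂, hl, hf⟩ := ih h
      exact ⟨x :: l₁, l₂, by simp [hl], by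
        intro y hy
        rcases List.mem_cons.mp hy with rfl | hy
        · exact hp
        · exact hf y hy⟩

/-- the rightmost-true finder applied to a doubled list -/
theorem lastTrue_flatMap (f : α → Bool) (f2 : β → Bool) (g2 g1 : α → β)
    (h2 : ∀ x, f2 (g2 x) = f x) (h1 : ∀ x, f2 (g1 x) = f x) (r : List α) :
    ((r.flatMap (fun x => [g2 x, g1 x])).reverse.find? f2)
      = (r.reverse.find? f).map g1 := by
  induction r with
  | nil => rfl
  | cons x r ih =>
    rw [List.flatMap_cons, List.reverse_append, List.reverse_cons, List.find?_append,
        List.find?_append, ih]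
    cases hfr : r.reverse.find? f with
    | some y => simp [hfr]
    | none =>
      simp only [hfr, Option.map_none, Option.none_or]
      cases hfx : f x with
      | true => simp [h1, h2, hfx, hfr]
      | false => simp [h1, h2, hfx, hfr]

section SIM

variable (f : α → Bool) (f2 : β → Bool) (g2 g1 : α → β) (z : α) (Z₂ : β)

/-- suffix-after-z-contains-a-true invariant -/
def Cinv (r : List α) : Prop := ∀ P S, r = P ++ z :: S → ∃ y ∈ S, f y = true

theorem cinv_step {x : α} (hx : x ≠ z) {r : List α} (h : Cinv f z r) :
    Cinv f z (step f x r) := by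
  cases r with
  | nil =>
    intro P S hPS
    simp only [step] at hPS
    rcases P with _ | ⟨p, P⟩
    · simp at hPS; exact absurd hPS.1 hx
    · simp at hPS
  | cons y t =>
    by_cases hc : f x = false ∧ f y = true
    · simp only [step, if_pos hc]
      intro P S hPS
      exact h (y :: P) S (by simp [hPS])
    · simp only [step, if_neg hc]
      intro P S hPS
      rcases P with _ | ⟨p, P⟩
      · simp at hPS; exact absurd hPS.1 hx
      · simp only [List.cons_append, List.cons.injEq] at hPS
        exact h P S hPS.2
theorem cinv_foldr {u : List α} (hu : z ∉ u) {r : List α} (h : Cinv f z r) :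
    Cinv f z (u.foldr (step f) r) := by
  induction u with
  | nil => exact h
  | cons x u ih =>
    have hx : x ≠ z := fun hh => hu (by simp [hh])
    exact cinv_step f z hx (ih (fun hh => hu (by simp [hh])))

theorem cinv_not_lastTrue {r : List α} (h : Cinv f z r) (hz : f z = true) :
    r.reverse.find? f ≠ some z := by
  intro hfind
  obtain ⟨l₁, l₂, hl, hf⟩ := findsplit hfind
  have hr : r = l₂.reverse ++ z :: l₁.reverse := by
    have := congrArg List.reverse hl
    simpa using this
  obtain ⟨y, hy, hfy⟩ := h _ _ hr
  exact absurd hfy (by simp [hf y (by simpa using hy)])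

/-- If `z` survives with everything after it all-false, the doubled fold
keeps `Z₂` as its rightmost true element. -/
theorem sim (hz : f z = true) (hg2 : ∀ x, f2 (g2 x) = f x) (hg1 : ∀ x, f2 (g1 x) = f x) :
    ∀ u : List α, z ∉ u → ∀ (Q s : List α) (ds : List β),
    (∀ y ∈ s, f y = false) → (∀ y ∈ ds, f2 y = false) → z ∉ s →
    (∃ Q', u.foldr (step f) (Q ++ z :: s) = Q' ++ z :: s ∧
      (u.flatMap (fun x => [g2 x, g1 x])).foldr (step f2)
        ((Q.flatMap (fun x => [g2 x, g1 x])) ++ Z₂ :: ds)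
        = (Q'.flatMap (fun x => [g2 x, g1 x])) ++ Z₂ :: ds)
    ∨ z ∉ u.foldr (step f) (Q ++ z :: s) := by
  intro u
  induction u with
  | nil => intro _ Q s ds _ _ _; exact Or.inl ⟨Q, rfl, rfl⟩
  | cons x u ih =>
    intro hzu Q s ds hs hds hzs
    have hxz : x ≠ z := fun hh => hzu (by simp [hh])
    rcases ih (fun hh => hzu (by simp [hh])) Q s ds hs hds hzs with ⟨Q', h1, h2⟩ | hno
    · rw [List.foldr_cons, h1, List.flatMap_cons, List.foldr_append, h2]
      simp only [List.foldr_cons, List.foldr_nil]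
      cases hfx : f x with
      | true =>
        left
        refine ⟨x :: Q', ?_, ?_⟩
        · rw [step_true f hfx]; rfl
        · have t1 : f2 (g1 x) = true := by rw [hg1, hfx]
          have t2 : f2 (g2 x) = true := by rw [hg2, hfx]
          rw [step_true f2 t1, step_true f2 t2]; rfl
      | false =>
        rcases Q' with _ | ⟨y, Q''⟩
        · right
          simp only [List.nil_append]
          rw [show step f x (z :: s) = s by simp [step, hfx, hz]]
          exact hzs
        · cases hfy : f y with
          | true =>
            left
            refine ⟨Q'', ?_, ?_⟩
            · simp [step, hfx, hfy]
            · rw [show ((y :: Q'').flatMap (fun x => [g2 x, g1 x])) ++ Z₂ :: ds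
                    = g2 y :: g1 y :: ((Q''.flatMap (fun x => [g2 x, g1 x])) ++ Z₂ :: ds) from rfl]
              rw [show step f2 (g1 x) (g2 y :: g1 y :: ((Q''.flatMap (fun x => [g2 x, g1 x])) ++ Z₂ :: ds))
                    = g1 y :: ((Q''.flatMap (fun x => [g2 x, g1 x])) ++ Z₂ :: ds) by
                  simp [step, hg1, hg2, hfx, hfy]]
              simp [step, hg1, hg2, hfx, hfy]
          | false =>
            left
            refine ⟨x :: y :: Q'', ?_, ?_⟩
            · simp [step, hfx, hfy]
            · rw [show ((y :: Q'').flatMap (fun x => [g2 x, g1 x])) ++ Z₂ :: ds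
                    = g2 y :: g1 y :: ((Q''.flatMap (fun x => [g2 x, g1 x])) ++ Z₂ :: ds) from rfl]
              rw [show step f2 (g1 x) (g2 y :: g1 y :: ((Q''.flatMap (fun x => [g2 x, g1 x])) ++ Z₂ :: ds))
                    = g1 x :: g2 y :: g1 y :: ((Q''.flatMap (fun x => [g2 x, g1 x])) ++ Z₂ :: ds) by
                  simp [step, hg1, hg2, hfx, hfy]]
              simp [step, hg1, hg2, hfx, hfy]
    · right
      rw [List.foldr_cons]
      intro hmem
      have := (step_sublist f x _).subset hmem
      rcases List.mem_cons.mp this with rfl | hh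
      · exact hxz rfl
      · exact hno hh

end SIM

end S15

namespace S15

/-! ## integer intervals -/

def myIvl (lo hi : ℤ) : List ℤ := (List.range (hi - lo + 1).toNat).map (fun t => lo + t)

theorem myIvl_eq (lo hi : ℤ) :
    myIvl lo hi = (List.range (hi - lo + 1).toNat).map (fun t : ℕ => lo + (t:ℤ)) := by
  show List.map (fun t => lo + t) (List.flatMap (fun (a : ℕ) => [(a : ℤ)]) (List.range (hi - lo + 1).toNat)) = _
  induction (List.range (hi - lo + 1).toNat) with
  | nil => rfl
  | cons x l ih => simp_all

theorem mem_myIvl {lo hi v : ℤ} : v ∈ myIvl lo hi ↔ lo ≤ v ∧ v ≤ hi := by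
  rw [myIvl_eq]
  simp only [List.mem_map, List.mem_range]
  constructor
  · rintro ⟨t, ht, rfl⟩; omega
  · intro h; exact ⟨(v - lo).toNat, by omega, by omega⟩

theorem myIvl_split {lo hi m : ℤ} (h1 : lo - 1 ≤ m) (h2 : m ≤ hi) :
    myIvl lo hi = myIvl lo m ++ myIvl (m+1) hi := by
  rw [myIvl_eq, myIvl_eq, myIvl_eq]
  have hn : (hi - lo + 1).toNat = (m - lo + 1).toNat + (hi - (m+1) + 1).toNat := by omega
  rw [hn, List.range_add, List.map_append, List.map_map]
  congr 1
  apply List.map_congr_left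
  intro t _
  simp only [Function.comp_apply]
  push_cast
  omega

theorem myIvl_singleton (a : ℤ) : myIvl a a = [a] := by
  rw [myIvl_eq, show (a - a + 1).toNat = 1 by omega, List.range_succ]
  simp

/-! ## contents -/

def cr (l : YPartition) (r : ℕ) : ℤ := (l.parts r : ℤ) - 1 - r
def ca (l : YPartition) (r : ℕ) : ℤ := (l.parts r : ℤ) - r

theorem parts_zero {l : YPartition} {N r : ℕ} (h : l.parts N = 0) (hr : N ≤ r) :
    l.parts r = 0 := Nat.le_zero.mp (h ▸ l.antitone hr)

theorem cr_lt {l : YPartition} {r s : ℕ} (h : r < s) : cr l s < cr l r := by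
  have h1 : l.parts s ≤ l.parts r := l.antitone h.le
  unfold cr; omega

theorem add_lt {l : YPartition} {r s : ℕ} (h : r < s) (hs : AddableRow l s) :
    ca l s < cr l r := by
  rcases hs with rfl | h2
  · omega
  · have h3 : l.parts (s-1) ≤ l.parts r := l.antitone (by omega)
    unfold ca cr; omega

theorem rem_ne_add {l : YPartition} {r s : ℕ} (hr : RemovableRow l r) (hs : AddableRow l s) :
    cr l r ≠ ca l s := by
  rcases lt_trichotomy r s with h | rfl | h
  · have := add_lt h hs; omega
  · unfold cr ca; omega
  · have := cr_lt (l := l) h; unfold cr ca at *; omega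

theorem add_ne_add {l : YPartition} {r s : ℕ} (h : r < s) (hs : AddableRow l s) :
    ca l s ≠ ca l r := by
  have := add_lt h hs; unfold ca cr at *; omega

theorem low_rem {l : YPartition} {r M : ℕ} (h : r < M) (hr : RemovableRow l r) :
    ca l M < cr l r := by
  have h1 : l.parts M ≤ l.parts (r+1) := l.antitone (by omega)
  unfold RemovableRow at hr
  unfold ca cr; omega

theorem low_add {l : YPartition} {r M : ℕ} (h : r < M) : ca l M < ca l r := by
  have h1 : l.parts M ≤ l.parts r := l.antitone h.le
  unfold ca; omega

/-! ## filters over ranges -/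

theorem filter_range_nil {p : ℕ → Bool} {M : ℕ} (h : ∀ r, r < M → p r = false) :
    (List.range M).filter p = [] := by
  rw [List.filter_eq_nil_iff]
  intro a ha
  simp [h a (List.mem_range.mp ha)]

theorem filter_range_singleton {p : ℕ → Bool} {M a : ℕ} (ha : a < M) (hpa : p a = true)
    (h : ∀ r, r < M → p r = true → r = a) : (List.range M).filter p = [a] := by
  induction M with
  | zero => omega
  | succ M ih =>
    rw [List.range_succ, List.filter_append]
    by_cases hM : a = M
    · subst hM
      rw [filter_range_nil (fun r hr => ?_)]
      · simp [hpa]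
      · cases hpr : p r
        · rfl
        · exact absurd (h r (by omega) hpr) (by omega)
    · rw [ih (by omega) (fun r hr hpr => h r (by omega) hpr)]
      have : p M = false := by
        cases hpM : p M
        · rfl
        · exact absurd (h M (by omega) hpM).symm hM
      simp [this]

end S15

namespace S15

theorem flatMap_congr' {α β : Type} {l : List α} {f g : α → List β}
    (h : ∀ x ∈ l, f x = g x) : l.flatMap f = l.flatMap g := by
  induction l with
  | nil => rfl
  | cons x l ih =>
    rw [List.flatMap_cons, List.flatMap_cons, h x (by simp), ih (fun y hy => h y (by simp [hy]))]

def rowRemM (l : YPartition) (s : ℤ) (M : ℕ) (v : ℤ) : List ℕ :=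
  (List.range M).filter
    (fun a => decide (RemovableRow l a) && decide ((l.parts a : ℤ) - 1 - (a : ℤ) + s = v))

def rowAddM (l : YPartition) (s : ℤ) (M : ℕ) (v : ℤ) : List ℕ :=
  (List.range M).filter
    (fun a => decide (AddableRow l a) && decide ((l.parts a : ℤ) - (a : ℤ) + s = v))

theorem nodeEntries_eq (l : YPartition) (s : ℤ) (c N : ℕ) (v : ℤ) :
    nodeEntries l s c N v
      = (rowRemM l s (N+2) v).map (fun a => ((false, c, a) : Bool × ℕ × ℕ))
        ++ (rowAddM l s (N+2) v).map (fun a => ((true, c, a) : Bool × ℕ × ℕ)) := rfl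

theorem rowRemM_nil {l : YPartition} {M : ℕ} {v : ℤ}
    (h : ∀ r, r < M → RemovableRow l r → cr l r ≠ v) : rowRemM l 0 M v = [] := by
  apply filter_range_nil
  intro r hr
  by_cases hR : RemovableRow l r
  · have : ¬((l.parts r : ℤ) - 1 - (r:ℤ) = v) := by
      have := h r hr hR; unfold cr at this; omega
    simp [this]
  · simp [hR]

theorem rowAddM_nil {l : YPartition} {M : ℕ} {v : ℤ}
    (h : ∀ r, r < M → AddableRow l r → ca l r ≠ v) : rowAddM l 0 M v = [] := by
  apply filter_range_nil
  intro r hr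
  by_cases hA : AddableRow l r
  · have : ¬((l.parts r : ℤ) - (r:ℤ) = v) := by
      have := h r hr hA; unfold ca at this; omega
    simp [this]
  · simp [hA]

theorem mem_rowRemM {l : YPartition} {M a : ℕ} {v : ℤ} :
    a ∈ rowRemM l 0 M v ↔ a < M ∧ RemovableRow l a ∧ cr l a = v := by
  simp only [rowRemM, List.mem_filter, List.mem_range, Bool.and_eq_true, decide_eq_true_eq]
  unfold cr
  constructor
  · rintro ⟨h1, h2, h3⟩; exact ⟨h1, h2, by omega⟩
  · rintro ⟨h1, h2, h3⟩; exact ⟨h1, h2, by omega⟩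

theorem mem_rowAddM {l : YPartition} {M a : ℕ} {v : ℤ} :
    a ∈ rowAddM l 0 M v ↔ a < M ∧ AddableRow l a ∧ ca l a = v := by
  simp only [rowAddM, List.mem_filter, List.mem_range, Bool.and_eq_true, decide_eq_true_eq]
  unfold ca
  constructor
  · rintro ⟨h1, h2, h3⟩; exact ⟨h1, h2, by omega⟩
  · rintro ⟨h1, h2, h3⟩; exact ⟨h1, h2, by omega⟩

variable (e : ℕ) (i : ZMod e)

def GM (l : YPartition) (M : ℕ) (v : ℤ) : List (Bool × ℕ) :=
  if (v : ZMod e) = i then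
    (rowRemM l 0 M v).map (fun a => ((false, a) : Bool × ℕ))
      ++ (rowAddM l 0 M v).map (fun a => ((true, a) : Bool × ℕ))
  else []

theorem GM_nil {l : YPartition} {M : ℕ} {v : ℤ}
    (h1 : rowRemM l 0 M v = []) (h2 : rowAddM l 0 M v = []) : GM e i l M v = [] := by
  unfold GM; split <;> simp [h1, h2]

theorem word1_content (l : YPartition) (N : ℕ) {lo hi : ℤ}
    (hlo : lo ≤ -(N:ℤ) - 2) (hhi : (l.parts 0 : ℤ) ≤ hi) :
    word1 e i l N = (myIvl lo hi).flatMap (GM e i l (N+2)) := by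
  have aux : ∀ M, M ≤ N + 2 →
      ((List.range M).reverse).flatMap (fun a =>
        (if RemovableRow l a ∧ remRes e l a = i then [((false, a) : Bool × ℕ)] else []) ++
        (if AddableRow l a ∧ addRes e l a = i then [((true, a) : Bool × ℕ)] else []))
      = (myIvl lo hi).flatMap (GM e i l M) := by
    intro M
    induction M with
    | zero =>
      intro _
      have hnil : ∀ v ∈ myIvl lo hi, GM e i l 0 v = [] := fun v _ =>
        GM_nil e i (by unfold rowRemM; simp) (by unfold rowAddM; simp)
      simp [List.flatMap_eq_nil_iff.mpr hnil]
    | succ M ih =>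
      intro hM1
      have hM : M ≤ N + 2 := by omega
      have hMN : M ≤ N + 1 := by omega
      have h1 : lo - 1 ≤ ca l M := by unfold ca; omega
      have h2 : ca l M ≤ hi := by
        have := l.antitone (Nat.zero_le M); unfold ca; omega
      have h3 : lo - 1 ≤ cr l M - 1 := by unfold cr; omega
      have hca : cr l M + 1 = ca l M := by unfold cr ca; omega
      have hcrca : cr l M < ca l M := by omega
      have hrev : (List.range (M+1)).reverse = M :: (List.range M).reverse := by
        rw [List.range_succ]; simp
      rw [hrev, List.flatMap_cons, ih hM]
      rw [myIvl_split h1 h2, List.flatMap_append, List.flatMap_append]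
      -- low part of GM M is empty
      have elow : (myIvl lo (ca l M)).flatMap (GM e i l M) = [] := by
        rw [List.flatMap_eq_nil_iff]
        intro v hv
        have hv' : v ≤ ca l M := (mem_myIvl.mp hv).2
        refine GM_nil e i (rowRemM_nil ?_) (rowAddM_nil ?_)
        · intro r hr hR
          have := low_rem (M := M) hr hR; omega
        · intro r hr _
          have := low_add (l := l) (M := M) hr; omega
      -- high part is stable
      have ehigh : (myIvl (ca l M + 1) hi).flatMap (GM e i l (M+1))
          = (myIvl (ca l M + 1) hi).flatMap (GM e i l M) := by
        apply flatMap_congr'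
        intro v hv
        have hv' : ca l M + 1 ≤ v := (mem_myIvl.mp hv).1
        unfold GM
        have er : rowRemM l 0 (M+1) v = rowRemM l 0 M v := by
          unfold rowRemM
          rw [List.range_succ, List.filter_append]
          have hc : ¬((l.parts M : ℤ) - 1 - (M:ℤ) = v) := by
            unfold cr ca at *; omega
          simp [hc]
        have ea : rowAddM l 0 (M+1) v = rowAddM l 0 M v := by
          unfold rowAddM
          rw [List.range_succ, List.filter_append]
          have hc : ¬((l.parts M : ℤ) - (M:ℤ) = v) := by unfold ca at hv'; omega
          simp [hc]
        rw [er, ea]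
      -- low part of GM (M+1) is the block of row M
      have elowM : (myIvl lo (ca l M)).flatMap (GM e i l (M+1))
          = (if RemovableRow l M ∧ remRes e l M = i then [((false, M) : Bool × ℕ)] else []) ++
            (if AddableRow l M ∧ addRes e l M = i then [((true, M) : Bool × ℕ)] else []) := by
        rw [myIvl_split (lo := lo) (hi := ca l M) (m := cr l M - 1) h3 (by omega),
            List.flatMap_append,
            myIvl_split (lo := cr l M - 1 + 1) (hi := ca l M) (m := cr l M) (by omega) (by omega),
            List.flatMap_append,
            show cr l M - 1 + 1 = cr l M by omega, myIvl_singleton,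
            show cr l M + 1 = ca l M from hca, myIvl_singleton,
            List.flatMap_singleton, List.flatMap_singleton]
        have pa : (myIvl lo (cr l M - 1)).flatMap (GM e i l (M+1)) = [] := by
          rw [List.flatMap_eq_nil_iff]
          intro v hv
          have hv' : v ≤ cr l M - 1 := (mem_myIvl.mp hv).2
          refine GM_nil e i (rowRemM_nil ?_) (rowAddM_nil ?_)
          · intro r hr hR
            rcases Nat.lt_succ_iff_lt_or_eq.mp hr with hr | rfl
            · have := low_rem (M := M) hr hR; omega
            · omega
          · intro r hr _
            rcases Nat.lt_succ_iff_lt_or_eq.mp hr with hr | rfl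
            · have := low_add (l := l) (M := M) hr; omega
            · omega
        have pb : GM e i l (M+1) (cr l M)
            = (if RemovableRow l M ∧ remRes e l M = i then [((false, M) : Bool × ℕ)] else []) := by
          have hrr : rowRemM l 0 (M+1) (cr l M)
              = if RemovableRow l M then [M] else [] := by
            by_cases hR : RemovableRow l M
            · rw [if_pos hR]
              apply filter_range_singleton (by omega)
              · simp only [Bool.and_eq_true, decide_eq_true_eq]
                exact ⟨hR, by unfold cr; omega⟩
              · intro r hr hp
                simp only [Bool.and_eq_true, decide_eq_true_eq] at hp
                by_contra hne
                have hrM : r < M := by omega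
                have := low_rem (M := M) hrM hp.1
                unfold cr at *; omega
            · rw [if_neg hR]
              apply rowRemM_nil
              intro r hr hR2
              rcases Nat.lt_succ_iff_lt_or_eq.mp hr with hr | rfl
              · have := low_rem (M := M) hr hR2; omega
              · exact absurd hR2 hR
          have haa : rowAddM l 0 (M+1) (cr l M) = [] := by
            apply rowAddM_nil
            intro r hr _
            rcases Nat.lt_succ_iff_lt_or_eq.mp hr with hr | rfl
            · have := low_add (l := l) (M := M) hr; omega
            · omega
          unfold GM
          rw [hrr, haa]
          have hres : ((cr l M : ℤ) : ZMod e) = remRes e l M := by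
            unfold cr remRes; norm_cast
          by_cases hi1 : ((cr l M : ℤ) : ZMod e) = i
          · rw [if_pos hi1]
            by_cases hR : RemovableRow l M
            · rw [if_pos hR, if_pos ⟨hR, by rw [← hres]; exact hi1⟩]; simp
            · rw [if_neg hR, if_neg (by tauto)]; simp
          · rw [if_neg hi1, if_neg (by rw [← hres] at *; tauto)]
        have pc : GM e i l (M+1) (ca l M)
            = (if AddableRow l M ∧ addRes e l M = i then [((true, M) : Bool × ℕ)] else []) := by
          have hrr : rowRemM l 0 (M+1) (ca l M) = [] := by
            apply rowRemM_nil
            intro r hr hR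
            rcases Nat.lt_succ_iff_lt_or_eq.mp hr with hr | rfl
            · have := low_rem (M := M) hr hR; omega
            · omega
          have haa : rowAddM l 0 (M+1) (ca l M)
              = if AddableRow l M then [M] else [] := by
            by_cases hA : AddableRow l M
            · rw [if_pos hA]
              apply filter_range_singleton (by omega)
              · simp only [Bool.and_eq_true, decide_eq_true_eq]
                exact ⟨hA, by unfold ca; omega⟩
              · intro r hr hp
                simp only [Bool.and_eq_true, decide_eq_true_eq] at hp
                by_contra hne
                have hrM : r < M := by omega
                have := low_add (l := l) (M := M) hrM
                unfold ca at *; omega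
            · rw [if_neg hA]
              apply rowAddM_nil
              intro r hr hA2
              rcases Nat.lt_succ_iff_lt_or_eq.mp hr with hr | rfl
              · have := low_add (l := l) (M := M) hr; omega
              · exact absurd hA2 hA
          unfold GM
          rw [hrr, haa]
          have hres : ((ca l M : ℤ) : ZMod e) = addRes e l M := by
            unfold ca addRes; norm_cast
          by_cases hi1 : ((ca l M : ℤ) : ZMod e) = i
          · rw [if_pos hi1]
            by_cases hA : AddableRow l M
            · rw [if_pos hA, if_pos ⟨hA, by rw [← hres]; exact hi1⟩]; simp
            · rw [if_neg hA, if_neg (by tauto)]; simp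
          · rw [if_neg hi1, if_neg (by rw [← hres] at *; tauto)]
        rw [pa, pb, pc]
        simp
      rw [elow, ehigh, elowM]
      simp
  unfold word1
  exact aux (N+2) le_rfl

end S15

namespace S15

def G2 (x : Bool × ℕ) : Bool × ℕ × ℕ := (x.1, 2, x.2)
def G1 (x : Bool × ℕ) : Bool × ℕ × ℕ := (x.1, 1, x.2)

theorem rowRemM_shape (l : YPartition) (M : ℕ) (v : ℤ) :
    rowRemM l 0 M v = [] ∨
      ∃ r, r < M ∧ RemovableRow l r ∧ cr l r = v ∧ rowRemM l 0 M v = [r] := by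
  by_cases hE : rowRemM l 0 M v = []
  · left; exact hE
  · right
    obtain ⟨r, hr⟩ := List.exists_mem_of_ne_nil _ hE
    obtain ⟨h1, h2, h3⟩ := mem_rowRemM.mp hr
    refine ⟨r, h1, h2, h3, ?_⟩
    unfold rowRemM
    apply filter_range_singleton h1
    · simp only [Bool.and_eq_true, decide_eq_true_eq]
      exact ⟨h2, by unfold cr at h3; omega⟩
    · intro r' hr' hp
      simp only [Bool.and_eq_true, decide_eq_true_eq] at hp
      by_contra hne
      rcases Nat.lt_or_ge r' r with hlt | hge
      · have := cr_lt (l := l) hlt; unfold cr at *; omega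
      · have hlt : r < r' := by omega
        have := cr_lt (l := l) hlt; unfold cr at *; omega

theorem rowAddM_shape (l : YPartition) (M : ℕ) (v : ℤ) :
    rowAddM l 0 M v = [] ∨
      ∃ r, r < M ∧ AddableRow l r ∧ ca l r = v ∧ rowAddM l 0 M v = [r] := by
  by_cases hE : rowAddM l 0 M v = []
  · left; exact hE
  · right
    obtain ⟨r, hr⟩ := List.exists_mem_of_ne_nil _ hE
    obtain ⟨h1, h2, h3⟩ := mem_rowAddM.mp hr
    refine ⟨r, h1, h2, h3, ?_⟩
    unfold rowAddM
    apply filter_range_singleton h1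
    · simp only [Bool.and_eq_true, decide_eq_true_eq]
      exact ⟨h2, by unfold ca at h3; omega⟩
    · intro r' hr' hp
      simp only [Bool.and_eq_true, decide_eq_true_eq] at hp
      by_contra hne
      rcases Nat.lt_or_ge r' r with hlt | hge
      · have := add_ne_add hlt h2; unfold ca at *; omega
      · have hlt : r < r' := by omega
        have := add_ne_add hlt hp.1; unfold ca at *; omega

theorem blockA (l : YPartition) (N : ℕ) (v : ℤ) :
    nodeEntries l 0 2 N v ++ nodeEntries l 0 1 N v
      = ((rowRemM l 0 (N+2) v).map (fun a => ((false, a) : Bool × ℕ))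
        ++ (rowAddM l 0 (N+2) v).map (fun a => ((true, a) : Bool × ℕ))).flatMap
          (fun x => [G2 x, G1 x]) := by
  rw [nodeEntries_eq, nodeEntries_eq]
  rcases rowRemM_shape l (N+2) v with hR | ⟨r, _, hRem, hcr, hR⟩ <;>
    rcases rowAddM_shape l (N+2) v with hA | ⟨s, _, hAdd, hca, hA⟩
  · simp [hR, hA]
  · simp [hR, hA, G2, G1]
  · simp [hR, hA, G2, G1]
  · exact absurd (by rw [hcr, hca]) (rem_ne_add hRem hAdd)

theorem word2_pair (E : ℕ) (i : ZMod E) (l1 l2 : YPartition) (N : ℕ) :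
    word2 E 0 0 i l1 l2 N
      = (myIvl (min 0 0 - (N : ℤ) - 2)
          (max 0 0 + (max (l1.parts 0) (l2.parts 0) : ℕ) + 2)).flatMap
          (fun (v : ℤ) => if ((v : ZMod E) = i) then
            nodeEntries l2 0 2 N v ++ nodeEntries l1 0 1 N v else []) := rfl

theorem word2_double (l : YPartition) (N : ℕ) :
    word2 e 0 0 i l l N = (word1 e i l N).flatMap (fun x => [G2 x, G1 x]) := by
  rw [word2_pair]
  rw [word1_content e i l N (lo := min 0 0 - (N : ℤ) - 2)
      (hi := max 0 0 + (max (l.parts 0) (l.parts 0) : ℕ) + 2)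
      (by simp) (by simp)]
  rw [List.flatMap_assoc]
  apply flatMap_congr'
  intro v hv
  unfold GM
  split
  · exact blockA l N v
  · rfl

theorem even_step (l : YPartition) (N a : ℕ)
    (hg : goodAddRow e i l N = some a) :
    goodAdd2 e 0 0 i l l N = some (1, a) := by
  unfold goodAdd2
  rw [word2_double]
  rw [reduce_flatMap_double (fun x => x.1) (fun x => x.1) G2 G1
      (fun x => rfl) (fun x => rfl)]
  rw [lastTrue_flatMap (fun x => x.1) (fun x => x.1) G2 G1 (fun x => rfl) (fun x => rfl)]
  unfold goodAddRow at hg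
  obtain ⟨zz, hzz, hsnd⟩ := Option.map_eq_some_iff.mp hg
  have hz1 : zz.1 = true := by simpa using List.find?_some hzz
  have hzzeq : zz = (true, a) := by
    rcases zz with ⟨b, n⟩
    simp at hz1 hsnd
    simp [hz1, hsnd]
  have hfst : (Prod.fst : Bool × ℕ → Bool) = fun x => x.1 := rfl
  rw [← hfst, hzz, hzzeq]
  simp [G1]

end S15

namespace S15

variable (e : ℕ) (i : ZMod e)

theorem goodAddRow_find {l : YPartition} {N a : ℕ} (hg : goodAddRow e i l N = some a) :
    (reduceWord Prod.fst (word1 e i l N)).reverse.find? (fun x => x.1)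
      = some ((true, a) : Bool × ℕ) := by
  unfold goodAddRow at hg
  obtain ⟨zz, hzz, hsnd⟩ := Option.map_eq_some_iff.mp hg
  have hz1 : zz.1 = true := by simpa using List.find?_some hzz
  have : zz = (true, a) := by
    rcases zz with ⟨b, n⟩
    simp at hz1 hsnd
    simp [hz1, hsnd]
  rw [← this]; exact hzz

theorem mem_word1 {l : YPartition} {N : ℕ} {x : Bool × ℕ}
    (h : x ∈ word1 e i l N) :
    x.2 < N + 2 ∧ ((x.1 = false ∧ RemovableRow l x.2 ∧ remRes e l x.2 = i) ∨
      (x.1 = true ∧ AddableRow l x.2 ∧ addRes e l x.2 = i)) := by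
  unfold word1 at h
  obtain ⟨r, hr, hx⟩ := List.mem_flatMap.mp h
  have hr' : r < N + 2 := List.mem_range.mp (List.mem_reverse.mp hr)
  rcases List.mem_append.mp hx with hx | hx
  · split at hx
    · simp at hx
      subst hx
      exact ⟨hr', Or.inl ⟨rfl, by assumption⟩⟩
    · simp at hx
  · split at hx
    · simp at hx
      subst hx
      exact ⟨hr', Or.inr ⟨rfl, by assumption⟩⟩
    · simp at hx

theorem goodAddRow_addable {l : YPartition} {N a : ℕ} (hg : goodAddRow e i l N = some a) :
    a < N + 2 ∧ AddableRow l a ∧ addRes e l a = i := by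
  have hfind := goodAddRow_find e i hg
  have hmem : ((true, a) : Bool × ℕ) ∈ word1 e i l N :=
    (reduceWord_sublist _ _).subset
      (List.mem_reverse.mp (List.mem_of_find?_eq_some hfind))
  obtain ⟨h1, h2⟩ := mem_word1 e i hmem
  rcases h2 with ⟨hh, _⟩ | ⟨_, h3, h4⟩
  · simp at hh
  · exact ⟨h1, h3, h4⟩

theorem word1_split {l : YPartition} {N a : ℕ}
    (hA : AddableRow l a) (hres : addRes e l a = i) (ha : a < N + 2) :
    ∃ u t, word1 e i l N = u ++ ((true, a) : Bool × ℕ) :: t ∧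
      ((true, a) : Bool × ℕ) ∉ u ∧ ((true, a) : Bool × ℕ) ∉ t := by
  have hmem : a ∈ (List.range (N+2)).reverse := by
    rw [List.mem_reverse, List.mem_range]; exact ha
  obtain ⟨L1, L2, hL⟩ := List.append_of_mem hmem
  have hnd : ((List.range (N+2)).reverse).Nodup := List.nodup_reverse.mpr (List.nodup_range)
  rw [hL] at hnd
  obtain ⟨nd1, nd2, hdisj⟩ := List.nodup_append'.mp hnd
  have haL1 : a ∉ L1 := fun hh => hdisj hh (by simp)
  have haL2 : a ∉ L2 := (List.nodup_cons.mp nd2).1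
  set bf : ℕ → List (Bool × ℕ) := fun r =>
    (if RemovableRow l r ∧ remRes e l r = i then [((false, r) : Bool × ℕ)] else []) ++
    (if AddableRow l r ∧ addRes e l r = i then [((true, r) : Bool × ℕ)] else []) with hbf
  have hblk : ∀ r, ∀ x ∈ bf r, x.2 = r := by
    intro r x hx
    rw [hbf] at hx
    rcases List.mem_append.mp hx with hx | hx <;> split at hx <;> simp at hx <;> simp [hx]
  have hword : word1 e i l N = L1.flatMap bf ++ (bf a ++ L2.flatMap bf) := by
    unfold word1
    rw [hL, List.flatMap_append, List.flatMap_cons]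
  have hbfa : bf a
      = (if RemovableRow l a ∧ remRes e l a = i then [((false, a) : Bool × ℕ)] else [])
        ++ [((true, a) : Bool × ℕ)] := by
    rw [hbf]
    simp only [if_pos (⟨hA, hres⟩ : AddableRow l a ∧ addRes e l a = i)]
  refine ⟨L1.flatMap bf ++ (if RemovableRow l a ∧ remRes e l a = i then [((false, a) : Bool × ℕ)] else []),
    L2.flatMap bf, ?_, ?_, ?_⟩
  · rw [hword, hbfa]; simp
  · intro hmem2
    rcases List.mem_append.mp hmem2 with hh | hh
    · obtain ⟨r, hrL, hxr⟩ := List.mem_flatMap.mp hh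
      have := hblk r _ hxr
      simp at this
      exact haL1 (this ▸ hrL)
    · split at hh <;> simp at hh
  · intro hmem2
    obtain ⟨r, hrL, hxr⟩ := List.mem_flatMap.mp hmem2
    have := hblk r _ hxr
    simp at this
    exact haL2 (this ▸ hrL)

theorem word1_stable {l : YPartition} {N M : ℕ} (hN : l.parts N = 0) (hNM : N ≤ M) :
    word1 e i l M = word1 e i l N := by
  induction M, hNM using Nat.le_induction with
  | base => rfl
  | succ M hM ih =>
    have hblk : (if RemovableRow l (M+2) ∧ remRes e l (M+2) = i then [((false, M+2) : Bool × ℕ)] else [])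
        ++ (if AddableRow l (M+2) ∧ addRes e l (M+2) = i then [((true, M+2) : Bool × ℕ)] else []) = [] := by
      have hz1 : l.parts (M+2+1) = 0 := parts_zero hN (by omega)
      have hz2 : l.parts (M+2) = 0 := parts_zero hN (by omega)
      have hz3 : l.parts (M+2-1) = 0 := parts_zero hN (by omega)
      have h1 : ¬ RemovableRow l (M+2) := by unfold RemovableRow; omega
      have h2 : ¬ AddableRow l (M+2) := by unfold AddableRow; push_neg; exact ⟨by omega, by omega⟩
      rw [if_neg (by tauto), if_neg (by tauto)]
      rfl
    have hrev : (List.range (M+1+2)).reverse = (M+2) :: (List.range (M+2)).reverse := by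
      rw [show M+1+2 = (M+2)+1 by omega, List.range_succ]; simp
    have hstep : word1 e i l (M+1) = word1 e i l M := by
      unfold word1
      rw [hrev, List.flatMap_cons, hblk]
      rfl
    rw [hstep, ih]

end S15

namespace S15

theorem res_ne {e : ℕ} (he : 1 < e) {v w : ℤ} (h : (v : ZMod e) = (w : ZMod e)) :
    v ≠ w + 1 ∧ v ≠ w - 1 := by
  have hd : (e : ℤ) ∣ (w - v) := ((ZMod.intCast_eq_intCast_iff _ _ _).mp h).dvd
  constructor <;> rintro rfl
  · have h1 : (e : ℤ) ∣ 1 := by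
      have : w - (w + 1) = -1 := by ring
      rw [this] at hd
      exact (Int.dvd_neg).mp hd
    have := Int.le_of_dvd one_pos h1
    omega
  · have h1 : (e : ℤ) ∣ 1 := by
      have : w - (w - 1) = 1 := by ring
      rwa [this] at hd
    have := Int.le_of_dvd one_pos h1
    omega

variable (e : ℕ) (i : ZMod e)

theorem word2_flip (he : 1 < e) (l l' : YPartition) {N a : ℕ}
    (hup : l'.parts = Function.update l.parts a (l.parts a + 1))
    (hA : AddableRow l a) (hres : addRes e l a = i) (haN : a ≤ N) :
    word2 e 0 0 i l' l N = (word1 e i l N).flatMap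
      (fun x => if x = ((true, a) : Bool × ℕ) then
        [((true, 2, a) : Bool × ℕ × ℕ), ((false, 1, a) : Bool × ℕ × ℕ)]
        else [G2 x, G1 x]) := by
  have hl'a : l'.parts a = l.parts a + 1 := by rw [hup]; simp
  have hl'ne : ∀ s, s ≠ a → l'.parts s = l.parts s := by
    intro s hs; rw [hup, Function.update_of_ne hs]
  have hresv : ((ca l a : ℤ) : ZMod e) = i := by
    rw [← hres]; unfold ca addRes; norm_cast
  have hRa : RemovableRow l' a := by
    unfold RemovableRow
    rw [hl'a, hl'ne (a+1) (by omega)]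
    have := l.antitone (show a ≤ a + 1 by omega)
    omega
  have hcra : cr l' a = ca l a := by unfold cr ca; rw [hl'a]; push_cast; ring
  rw [word2_pair]
  rw [word1_content e i l N (lo := min 0 0 - (N : ℤ) - 2)
      (hi := max 0 0 + (max (l'.parts 0) (l.parts 0) : ℕ) + 2)
      (by simp) (by simp; omega)]
  rw [List.flatMap_assoc]
  apply flatMap_congr'
  intro v hv
  unfold GM
  by_cases hif : (v : ZMod e) = i
  · rw [if_pos hif, if_pos hif]
    by_cases hv0 : v = ca l a
    · subst hv0
      have e1 : rowRemM l 0 (N+2) (ca l a) = [] :=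
        rowRemM_nil (fun r _ hR => rem_ne_add hR hA)
      have e2 : rowAddM l 0 (N+2) (ca l a) = [a] := by
        unfold rowAddM
        apply filter_range_singleton (by omega)
        · simp only [Bool.and_eq_true, decide_eq_true_eq]
          exact ⟨hA, by unfold ca; omega⟩
        · intro r hr hp
          simp only [Bool.and_eq_true, decide_eq_true_eq] at hp
          by_contra hne
          rcases Nat.lt_or_ge r a with hlt | hge
          · have := add_ne_add hlt hA
            unfold ca at *; omega
          · have hlt : a < r := by omega
            have := add_ne_add hlt hp.1
            unfold ca at *; omega
      have e3 : rowRemM l' 0 (N+2) (ca l a) = [a] := by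
        unfold rowRemM
        apply filter_range_singleton (by omega)
        · simp only [Bool.and_eq_true, decide_eq_true_eq]
          refine ⟨hRa, ?_⟩
          unfold cr at hcra; unfold ca at hcra ⊢; omega
        · intro r hr hp
          simp only [Bool.and_eq_true, decide_eq_true_eq] at hp
          by_contra hne
          have hcc : cr l' r = cr l' a := by
            unfold ca at hp hcra; unfold cr at hcra ⊢; omega
          rcases Nat.lt_or_ge r a with hlt | hge
          · have := cr_lt (l := l') hlt; omega
          · have hlt : a < r := by omega
            have := cr_lt (l := l') hlt; omega
      have e4 : rowAddM l' 0 (N+2) (ca l a) = [] := by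
        apply rowAddM_nil
        intro r hr hA'
        by_cases hra : r = a
        · have hcc : ca l' r = ca l a + 1 := by
            unfold ca; rw [hra, hl'a]; push_cast; ring
          omega
        · have := rem_ne_add (l := l') hRa hA'
          omega
      rw [nodeEntries_eq, nodeEntries_eq, e1, e2, e3, e4]
      simp [G2, G1]
    · have hne1 : v ≠ ca l a + 1 := (res_ne he (by rw [hif, hresv])).1
      have hne2 : v ≠ ca l a - 1 := (res_ne he (by rw [hif, hresv])).2
      have eR : rowRemM l' 0 (N+2) v = rowRemM l 0 (N+2) v := by
        unfold rowRemM
        apply List.filter_congr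
        intro r _
        by_cases h1 : r = a
        · subst h1
          have cL : ¬((l'.parts r : ℤ) - 1 - (r:ℤ) = v) := by
            rw [hl'a]; unfold ca at hv0; push_cast; omega
          have cR : ¬((l.parts r : ℤ) - 1 - (r:ℤ) = v) := by
            unfold ca at hne2; omega
          simp [cL, cR]
        · by_cases h2 : r + 1 = a
          · have hpr : l'.parts r = l.parts r := hl'ne r h1
            have hpr1 : l'.parts (r+1) = l.parts a + 1 := by rw [h2, hl'a]
            have hlt : l.parts a < l.parts r := by
              rcases hA with h | h
              · omega
              · have : a - 1 = r := by omega
                rwa [this] at h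
            by_cases hc : l.parts a + 1 < l.parts r
            · have hb1 : RemovableRow l' r := by
                unfold RemovableRow; rw [hpr, hpr1]; omega
              have hb2 : RemovableRow l r := by
                unfold RemovableRow; rw [h2]; omega
              simp only [decide_eq_true hb1, decide_eq_true hb2, hpr]
            · have hpr_eq : l.parts r = l.parts a + 1 := by omega
              have hnR' : ¬ RemovableRow l' r := by
                unfold RemovableRow; rw [hpr, hpr1]; omega
              have hcontent : ¬((l.parts r : ℤ) - 1 - (r:ℤ) = v) := by
                unfold ca at hne1; omega
              simp [hnR', hcontent]
          · have hpr : l'.parts r = l.parts r := hl'ne r h1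
            have hpr1 : l'.parts (r+1) = l.parts (r+1) := hl'ne (r+1) h2
            unfold RemovableRow
            simp only [hpr, hpr1]
            congr
      have eA : rowAddM l' 0 (N+2) v = rowAddM l 0 (N+2) v := by
        unfold rowAddM
        apply List.filter_congr
        intro r _
        by_cases h1 : r = a
        · subst h1
          have cL : ¬((l'.parts r : ℤ) - (r:ℤ) = v) := by
            rw [hl'a]; unfold ca at hne1; push_cast; omega
          have cR : ¬((l.parts r : ℤ) - (r:ℤ) = v) := by
            unfold ca at hv0; omega
          simp [cL, cR]
        · by_cases h2 : r = a + 1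
          · subst h2
            have hpr : l'.parts (a+1) = l.parts (a+1) := hl'ne (a+1) (by omega)
            have hprm : l'.parts (a+1-1) = l.parts a + 1 := by
              rw [show a+1-1 = a by omega, hl'a]
            have hle : l.parts (a+1) ≤ l.parts a := l.antitone (by omega)
            by_cases hc : l.parts (a+1) < l.parts a
            · have hb1 : AddableRow l' (a+1) := by
                unfold AddableRow; right; rw [hpr, hprm]; omega
              have hb2 : AddableRow l (a+1) := by
                unfold AddableRow; right
                rw [show a+1-1 = a by omega]; omega
              simp only [decide_eq_true hb1, decide_eq_true hb2, hpr]
            · have heq : l.parts (a+1) = l.parts a := by omega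
              have hnA : ¬ AddableRow l (a+1) := by
                unfold AddableRow; push_neg
                refine ⟨by omega, ?_⟩
                rw [show a+1-1 = a by omega]; omega
              rw [decide_eq_false (show ¬((l'.parts (a+1) : ℤ) - ((a+1:ℕ):ℤ) + 0 = v) from by
                    rw [hpr]; unfold ca at hne2; push_cast; omega),
                  decide_eq_false hnA]
              simp
          · have hpr : l'.parts r = l.parts r := hl'ne r h1
            have hprm : l'.parts (r-1) = l.parts (r-1) := hl'ne (r-1) (by omega)
            unfold AddableRow
            simp only [hpr, hprm]
            congr
      rw [nodeEntries_eq l' 0 1 N v, eR, eA, ← nodeEntries_eq l 0 1 N v, blockA l N v]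
      apply flatMap_congr'
      intro x hx
      rw [if_neg ?hne]
      case hne =>
        rintro rfl
        rcases List.mem_append.mp hx with hh | hh
        · obtain ⟨r, _, hr2⟩ := List.mem_map.mp hh
          simp at hr2
        · obtain ⟨r, hr1, hr2⟩ := List.mem_map.mp hh
          have hra : r = a := by simpa using hr2
          subst hra
          exact hv0 ((mem_rowAddM.mp hr1).2.2).symm
  · rw [if_neg hif, if_neg hif]
    rfl

end S15

namespace S15

variable (e : ℕ) (i : ZMod e)

theorem odd_step (he : 1 < e) (l l' : YPartition) {N a : ℕ}
    (hup : l'.parts = Function.update l.parts a (l.parts a + 1))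
    (hN : l.parts N = 0)
    (hg : goodAddRow e i l N = some a) :
    goodAdd2 e 0 0 i l' l N = some (2, a) := by
  obtain ⟨haN2, hA, hres⟩ := goodAddRow_addable e i hg
  have haN : a ≤ N := by
    by_contra h
    rcases hA with rfl | hlt
    · omega
    · have : l.parts (a-1) = 0 := parts_zero hN (by omega)
      omega
  obtain ⟨u, t, hw, hzu, hzt⟩ := word1_split e i hA hres haN2
  have hfind : (reduceWord (fun x => x.1) (word1 e i l N)).reverse.find? (fun x => x.1)
      = some ((true, a) : Bool × ℕ) := goodAddRow_find e i hg
  have hzrt : ((true, a) : Bool × ℕ) ∉ reduceWord (fun x => x.1) t :=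
    fun h => hzt ((reduceWord_sublist _ t).subset h)
  have hF1 : reduceWord (fun x : Bool × ℕ => x.1) (word1 e i l N)
      = u.foldr (step (fun x : Bool × ℕ => x.1))
          (((true, a) : Bool × ℕ) :: reduceWord (fun x : Bool × ℕ => x.1) t) := by
    rw [hw, reduceWord_append, reduceWord_cons,
        step_true (fun x : Bool × ℕ => x.1) rfl]
  have hrtf : ∀ y ∈ reduceWord (fun x : Bool × ℕ => x.1) t, (fun x : Bool × ℕ => x.1) y = false := by
    by_contra hcon
    push_neg at hcon
    obtain ⟨y, hy, hfy⟩ := hcon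
    have hfy' : y.1 = true := by revert hfy; cases y.1 <;> simp
    have hC : Cinv (fun x : Bool × ℕ => x.1) ((true, a) : Bool × ℕ)
        (((true, a) : Bool × ℕ) :: reduceWord (fun x : Bool × ℕ => x.1) t) := by
      intro P S hPS
      rcases P with _ | ⟨p, P'⟩
      · simp only [List.nil_append, List.cons.injEq] at hPS
        exact ⟨y, hPS.2 ▸ hy, hfy'⟩
      · simp only [List.cons_append, List.cons.injEq] at hPS
        exact absurd (hPS.2 ▸ (List.mem_append.mpr (Or.inr (by simp)))) hzrt
    exact cinv_not_lastTrue (fun x : Bool × ℕ => x.1) _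
      (cinv_foldr (fun x : Bool × ℕ => x.1) _ hzu hC) rfl (hF1 ▸ hfind)
  have hw2 : word2 e 0 0 i l' l N
      = u.flatMap (fun x => [G2 x, G1 x]) ++
        (((true, 2, a) : Bool × ℕ × ℕ) :: ((false, 1, a) : Bool × ℕ × ℕ) ::
          t.flatMap (fun x => [G2 x, G1 x])) := by
    rw [word2_flip e i he l l' hup hA hres haN, hw, List.flatMap_append, List.flatMap_cons]
    rw [if_pos rfl]
    have h1 : u.flatMap (fun x => if x = ((true, a) : Bool × ℕ) then
        [((true, 2, a) : Bool × ℕ × ℕ), ((false, 1, a) : Bool × ℕ × ℕ)]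
        else [G2 x, G1 x]) = u.flatMap (fun x => [G2 x, G1 x]) :=
      flatMap_congr' (fun x hx => if_neg (fun (hh : x = ((true, a) : Bool × ℕ)) => hzu (hh ▸ hx)))
    have h2 : t.flatMap (fun x => if x = ((true, a) : Bool × ℕ) then
        [((true, 2, a) : Bool × ℕ × ℕ), ((false, 1, a) : Bool × ℕ × ℕ)]
        else [G2 x, G1 x]) = t.flatMap (fun x => [G2 x, G1 x]) :=
      flatMap_congr' (fun x hx => if_neg (fun (hh : x = ((true, a) : Bool × ℕ)) => hzt (hh ▸ hx)))
    rw [h1, h2]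
    rfl
  have hredt : reduceWord (fun x : Bool × ℕ × ℕ => x.1) (t.flatMap (fun x => [G2 x, G1 x]))
      = (reduceWord (fun x : Bool × ℕ => x.1) t).flatMap (fun x => [G2 x, G1 x]) :=
    reduce_flatMap_double (fun x : Bool × ℕ => x.1) (fun x : Bool × ℕ × ℕ => x.1) G2 G1 (fun x => rfl) (fun x => rfl) t
  have hds : ∀ y ∈ (((false, 1, a) : Bool × ℕ × ℕ) ::
      (reduceWord (fun x : Bool × ℕ => x.1) t).flatMap (fun x => [G2 x, G1 x])),
      (fun x : Bool × ℕ × ℕ => x.1) y = false := by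
    intro y hy
    rcases List.mem_cons.mp hy with rfl | hy
    · rfl
    · obtain ⟨x, hx, hxy⟩ := List.mem_flatMap.mp hy
      have hxf := hrtf x hx
      rcases List.mem_cons.mp hxy with rfl | hxy
      · exact hxf
      · simp at hxy
        rw [hxy]
        exact hxf
  have hF2 : reduceWord (fun x : Bool × ℕ × ℕ => x.1) (word2 e 0 0 i l' l N)
      = (u.flatMap (fun x => [G2 x, G1 x])).foldr (step (fun x : Bool × ℕ × ℕ => x.1))
          (((true, 2, a) : Bool × ℕ × ℕ) :: ((false, 1, a) : Bool × ℕ × ℕ) ::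
            (reduceWord (fun x : Bool × ℕ => x.1) t).flatMap (fun x => [G2 x, G1 x])) := by
    rw [hw2, reduceWord_append, reduceWord_cons, reduceWord_cons, hredt,
        step_false_allfalse (fun x : Bool × ℕ × ℕ => x.1) rfl
          (fun y hy => hds y (List.mem_cons.mpr (Or.inr hy))),
        step_true (fun x : Bool × ℕ × ℕ => x.1) rfl]
  rcases sim (fun x : Bool × ℕ => x.1) (fun x : Bool × ℕ × ℕ => x.1) G2 G1
      ((true, a) : Bool × ℕ) ((true, 2, a) : Bool × ℕ × ℕ) rfl (fun x => rfl) (fun x => rfl)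
      u hzu [] (reduceWord (fun x : Bool × ℕ => x.1) t)
      (((false, 1, a) : Bool × ℕ × ℕ) ::
        (reduceWord (fun x : Bool × ℕ => x.1) t).flatMap (fun x => [G2 x, G1 x]))
      hrtf hds hzrt with ⟨Q', hQ1, hQ2⟩ | hno
  · unfold goodAdd2
    have hfull : reduceWord (fun x : Bool × ℕ × ℕ => x.1) (word2 e 0 0 i l' l N)
        = Q'.flatMap (fun x => [G2 x, G1 x]) ++
          (((true, 2, a) : Bool × ℕ × ℕ) :: ((false, 1, a) : Bool × ℕ × ℕ) ::
            (reduceWord (fun x : Bool × ℕ => x.1) t).flatMap (fun x => [G2 x, G1 x])) := by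
      rw [hF2]
      simpa using hQ2
    rw [hfull, List.reverse_append, List.find?_append]
    have h1 : ((((true, 2, a) : Bool × ℕ × ℕ) :: ((false, 1, a) : Bool × ℕ × ℕ) ::
        (reduceWord (fun x : Bool × ℕ => x.1) t).flatMap (fun x => [G2 x, G1 x])).reverse).find?
          (fun x => x.1) = some ((true, 2, a) : Bool × ℕ × ℕ) := by
      rw [show (((true, 2, a) : Bool × ℕ × ℕ) :: ((false, 1, a) : Bool × ℕ × ℕ) ::
          (reduceWord (fun x : Bool × ℕ => x.1) t).flatMap (fun x => [G2 x, G1 x])).reverse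
          = (((false, 1, a) : Bool × ℕ × ℕ) ::
            (reduceWord (fun x : Bool × ℕ => x.1) t).flatMap (fun x => [G2 x, G1 x])).reverse
            ++ [((true, 2, a) : Bool × ℕ × ℕ)] by simp]
      rw [List.find?_append]
      have hnone : ((((false, 1, a) : Bool × ℕ × ℕ) ::
          (reduceWord (fun x : Bool × ℕ => x.1) t).flatMap (fun x => [G2 x, G1 x])).reverse).find?
            (fun x => x.1) = none :=
        List.find?_eq_none.mpr (fun x hx => by simp [hds x (List.mem_reverse.mp hx)])
      rw [hnone]
      rfl
    rw [h1]
    rfl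
  · exfalso
    apply hno
    have hzF : ((true, a) : Bool × ℕ) ∈ reduceWord (fun x : Bool × ℕ => x.1) (word1 e i l N) :=
      List.mem_reverse.mp (List.mem_of_find?_eq_some hfind)
    rw [hF1] at hzF
    simpa using hzF

end S15

/-- if the `e`-regular partition `λ` is reached from `∅` by the level-1
operators `f̃_{i_1} ⋯ f̃_{i_n}`, then applying each operator twice in the level-2 Fock
space with bicharge `(0,0)` reaches the doubled bipartition `(λ,λ)`; in particular
`(λ,λ)` is an Uglov bipartition for `(e,(0,0))`. -/
theorem stmt_15 (e n : ℕ) (he : 1 < e) (l : YPartition) (hreg : ERegular e l)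
    (res : ℕ → ℤ) (seq : ℕ → YPartition)
    (h0 : seq 0 = emptyP) (hn : seq n = l)
    (hstep : ∀ t, t < n → FStep1 e ((res t : ℤ) : ZMod e) (seq t) (seq (t+1))) :
    ∃ bseq : ℕ → YPartition × YPartition,
      bseq 0 = (emptyP, emptyP) ∧ bseq (2*n) = (l, l) ∧
      ∀ t, t < 2*n →
        FStep2 e 0 0 ((res (t/2) : ℤ) : ZMod e) (bseq t) (bseq (t+1)) := by
  refine ⟨fun t => (if t % 2 = 1 then seq (t/2 + 1) else seq (t/2), seq (t/2)), ?_, ?_, ?_⟩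
  · simp [h0]
  · have e1 : ¬ (2 * n % 2 = 1) := by omega
    have e2 : 2 * n / 2 = n := by omega
    simp [e1, e2, hn]
  · intro t ht
    rcases Nat.even_or_odd t with ⟨u, hu⟩ | ⟨u, hu⟩
    · subst hu
      have hun : u < n := by omega
      obtain ⟨a, N, hN0, hgood, hupd⟩ := hstep u hun
      have i1 : ¬ ((u + u) % 2 = 1) := by omega
      have i2 : (u + u) / 2 = u := by omega
      have i3 : (u + u + 1) % 2 = 1 := by omega
      have i4 : (u + u + 1) / 2 = u := by omega
      simp only [i1, i2, i3, i4, if_neg, if_pos, if_true, if_false, ite_false, ite_true]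
      refine ⟨1, a, N, hN0, hN0, ?_, Or.inl ⟨rfl, hupd, rfl⟩⟩
      exact S15.even_step (seq u) N a hgood
    · subst hu
      have hun : u < n := by omega
      obtain ⟨a, N, hN0, hgood, hupd⟩ := hstep u hun
      have hN'0 : (seq u).parts (max N (a+1)) = 0 :=
        S15.parts_zero hN0 (le_max_left _ _)
      have hN'1 : (seq (u+1)).parts (max N (a+1)) = 0 := by
        rw [hupd, Function.update_of_ne (by omega)]
        exact hN'0
      have hgood' : goodAddRow e ((res u : ℤ) : ZMod e) (seq u) (max N (a+1)) = some a := by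
        unfold goodAddRow at hgood ⊢
        rw [S15.word1_stable e _ hN0 (le_max_left _ _)]
        exact hgood
      have i1 : (2 * u + 1) % 2 = 1 := by omega
      have i2 : (2 * u + 1) / 2 = u := by omega
      have i3 : ¬ ((2 * u + 1 + 1) % 2 = 1) := by omega
      have i4 : (2 * u + 1 + 1) / 2 = u + 1 := by omega
      simp only [i1, i2, i3, i4, if_neg, if_pos, if_true, if_false, ite_false, ite_true]
      refine ⟨2, a, max N (a+1), hN'1, hN'0, ?_, Or.inr ⟨rfl, hupd, rfl⟩⟩
      exact S15.odd_step e _ he (seq u) (seq (u+1)) hupd hN'0 hgood'
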